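/- For positive trace class operators with integral kernels σ(x,y) and δ(x,y) on L²(ℝ³) and any bounded measurable even V, |∫∫ V(x-y)[|(σ+δ)(x,y)|² - |σ(x,y)|²] dx dy| ≤ 2 ∫∫ |V(x-y)| (σ+δ)(x,x) δ(y,y) dx dy. -/

import Mathlib

open MeasureTheory Complex

noncomputable section

abbrev R3 := EuclideanSpace ℝ (Fin 3)

/-- A function `k : ℝ³ × ℝ³ → ℂ` is the integral kernel of a positive trace class
operator on `L²(ℝ³)` if it admits a spectral decomposition
`k(x,y) = ∑ₙ λₙ φₙ(x) conj(φₙ(y))` with `λₙ ≥ 0`, `∑ λₙ < ∞` and normalized `φₙ ∈ L²`,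
and its diagonal is integrable. -/
def IsPosTCKernel (k : R3 → R3 → ℂ) : Prop :=
  ∃ (lam : ℕ → ℝ) (φ : ℕ → R3 → ℂ),
    (∀ n, 0 ≤ lam n) ∧ Summable lam ∧
    (∀ n, ∫ x : R3, ‖φ n x‖ ^ 2 = 1) ∧
    (∀ x y : R3, HasSum (fun n => (lam n : ℂ) * φ n x * (starRingEnd ℂ) (φ n y)) (k x y)) ∧
    Integrable (fun x : R3 => (k x x).re)

lemma diag_term (lam : ℝ) (z : ℂ) : ((lam:ℂ) * z * (starRingEnd ℂ) z).re = lam * ‖z‖^2 := by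
  rw [mul_assoc, Complex.mul_conj, ← Complex.ofReal_mul, Complex.ofReal_re,
    Complex.normSq_eq_norm_sq]

lemma diag_hasSum {k : R3 → R3 → ℂ} {lam : ℕ → ℝ} {φ : ℕ → R3 → ℂ}
    (hks : ∀ x y : R3, HasSum (fun n => (lam n : ℂ) * φ n x * (starRingEnd ℂ) (φ n y)) (k x y))
    (x : R3) : HasSum (fun n => lam n * ‖φ n x‖^2) ((k x x).re) := by
  have := Complex.hasSum_re (hks x x)
  simpa only [diag_term] using this

lemma kernel_bound {k : R3 → R3 → ℂ} {lam : ℕ → ℝ} {φ : ℕ → R3 → ℂ}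
    (hl : ∀ n, 0 ≤ lam n)
    (hks : ∀ x y : R3, HasSum (fun n => (lam n : ℂ) * φ n x * (starRingEnd ℂ) (φ n y)) (k x y))
    (x y : R3) :
    ‖k x y‖ ≤ Real.sqrt ((k x x).re) * Real.sqrt ((k y y).re) := by
  have hA := diag_hasSum hks x
  have hB := diag_hasSum hks y
  have hterm : ∀ n, ‖(lam n : ℂ) * φ n x * (starRingEnd ℂ) (φ n y)‖
      = Real.sqrt (lam n * ‖φ n x‖^2) * Real.sqrt (lam n * ‖φ n y‖^2) := by
    intro n
    rw [Real.sqrt_mul (hl n), Real.sqrt_mul (hl n), Real.sqrt_sq (norm_nonneg _),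
      Real.sqrt_sq (norm_nonneg _), norm_mul, norm_mul, Complex.norm_real,
      Real.norm_eq_abs, _root_.abs_of_nonneg (hl n), starRingEnd_apply, norm_star,
      show (Real.sqrt (lam n) * ‖φ n x‖) * (Real.sqrt (lam n) * ‖φ n y‖)
        = (Real.sqrt (lam n) * Real.sqrt (lam n)) * (‖φ n x‖ * ‖φ n y‖) by ring,
      Real.mul_self_sqrt (hl n)]
    ring
  have hsummable : Summable (fun n => ‖(lam n : ℂ) * φ n x * (starRingEnd ℂ) (φ n y)‖) := by
    apply Summable.of_nonneg_of_le (fun n => norm_nonneg _)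
      (fun n => ?_) ((hA.summable.add hB.summable).div_const 2)
    rw [hterm n]
    nlinarith [Real.sq_sqrt (mul_nonneg (hl n) (sq_nonneg ‖φ n x‖)),
      Real.sq_sqrt (mul_nonneg (hl n) (sq_nonneg ‖φ n y‖)),
      sq_nonneg (Real.sqrt (lam n * ‖φ n x‖^2) - Real.sqrt (lam n * ‖φ n y‖^2))]
  have hnorm := norm_tsum_le_tsum_norm
    (f := fun n => (lam n : ℂ) * φ n x * (starRingEnd ℂ) (φ n y)) hsummable
  rw [(hks x y).tsum_eq] at hnorm
  refine hnorm.trans ?_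
  refine Summable.tsum_le_of_sum_le hsummable (fun s => ?_)
  calc ∑ n ∈ s, ‖(lam n : ℂ) * φ n x * (starRingEnd ℂ) (φ n y)‖
      = ∑ n ∈ s, Real.sqrt (lam n * ‖φ n x‖^2) * Real.sqrt (lam n * ‖φ n y‖^2) := by
        simp only [hterm]
    _ ≤ Real.sqrt (∑ n ∈ s, lam n * ‖φ n x‖^2) * Real.sqrt (∑ n ∈ s, lam n * ‖φ n y‖^2) :=
        Real.sum_sqrt_mul_sqrt_le s (fun n => mul_nonneg (hl n) (sq_nonneg _))
          (fun n => mul_nonneg (hl n) (sq_nonneg _))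
    _ ≤ Real.sqrt ((k x x).re) * Real.sqrt ((k y y).re) := by
        apply mul_le_mul
        · exact Real.sqrt_le_sqrt (sum_le_hasSum s (fun n _ => mul_nonneg (hl n) (sq_nonneg _)) hA)
        · exact Real.sqrt_le_sqrt (sum_le_hasSum s (fun n _ => mul_nonneg (hl n) (sq_nonneg _)) hB)
        · positivity
        · positivity

lemma swap_int {α : Type*} [MeasureSpace α] [SigmaFinite (volume : Measure α)] (g : α × α → ℝ) :
    ∫ p : α × α, g p.swap = ∫ p, g p := by
  have hmp : MeasurePreserving (Prod.swap : α × α → α × α) volume volume := by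
    rw [Measure.volume_eq_prod]
    exact Measure.measurePreserving_swap
  exact hmp.integral_comp (MeasurableEquiv.prodComm (α := α) (β := α)).measurableEmbedding g

lemma swap_integrable {α : Type*} [MeasureSpace α] [SigmaFinite (volume : Measure α)]
    (g : α × α → ℝ) (hg : Integrable g) : Integrable (fun p : α × α => g p.swap) := by
  have hmp : MeasurePreserving (Prod.swap : α × α → α × α) volume volume := by
    rw [Measure.volume_eq_prod]
    exact Measure.measurePreserving_swap
  exact (hmp.integrable_comp_emb
    (MeasurableEquiv.prodComm (α := α) (β := α)).measurableEmbedding).mpr hg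

lemma sqrt_mix {a b c d : ℝ} (ha : 0 ≤ a) (hb : 0 ≤ b) (hc : 0 ≤ c) (hd : 0 ≤ d) :
    Real.sqrt a * Real.sqrt c + Real.sqrt b * Real.sqrt d
      ≤ Real.sqrt (a+b) * Real.sqrt (c+d) := by
  have h2 : (Real.sqrt a * Real.sqrt c + Real.sqrt b * Real.sqrt d)^2 ≤ (a+b)*(c+d) := by
    nlinarith [Real.mul_self_sqrt ha, Real.mul_self_sqrt hb, Real.mul_self_sqrt hc,
      Real.mul_self_sqrt hd, sq_nonneg (Real.sqrt a * Real.sqrt d - Real.sqrt b * Real.sqrt c),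
      Real.sqrt_nonneg a, Real.sqrt_nonneg b, Real.sqrt_nonneg c, Real.sqrt_nonneg d]
  calc Real.sqrt a * Real.sqrt c + Real.sqrt b * Real.sqrt d
      ≤ Real.sqrt ((a+b)*(c+d)) := Real.le_sqrt_of_sq_le h2
    _ = _ := Real.sqrt_mul (by linarith) _

lemma core_ineq {u v w A A' D D' : ℝ}
    (hA : 0 ≤ A) (hA' : 0 ≤ A') (hD : 0 ≤ D) (hD' : 0 ≤ D')
    (hu0 : 0 ≤ u) (hv0 : 0 ≤ v)
    (hu : u ≤ Real.sqrt A * Real.sqrt A') (hv : v ≤ Real.sqrt A * Real.sqrt A')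
    (hw : w ≤ Real.sqrt D * Real.sqrt D') (huv : |u - v| ≤ w) :
    |u^2 - v^2| ≤ A*D' + A'*D := by
  have hw0 : 0 ≤ w := le_trans (abs_nonneg _) huv
  have h2 : |u^2 - v^2| = |u - v| * (u + v) := by
    rw [show u^2 - v^2 = (u-v)*(u+v) by ring, abs_mul, _root_.abs_of_nonneg (add_nonneg hu0 hv0)]
  have h1 : |u - v| * (u + v) ≤ (Real.sqrt D * Real.sqrt D') * (2*(Real.sqrt A * Real.sqrt A')) :=
    mul_le_mul (huv.trans hw) (by linarith) (add_nonneg hu0 hv0) (by positivity)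
  have hst : (Real.sqrt D * Real.sqrt D') * (2*(Real.sqrt A * Real.sqrt A')) ≤ A*D' + A'*D := by
    nlinarith [Real.mul_self_sqrt hA, Real.mul_self_sqrt hA', Real.mul_self_sqrt hD,
      Real.mul_self_sqrt hD', sq_nonneg (Real.sqrt A * Real.sqrt D' - Real.sqrt A' * Real.sqrt D),
      Real.sqrt_nonneg A, Real.sqrt_nonneg A', Real.sqrt_nonneg D, Real.sqrt_nonneg D']
  linarith [h2 ▸ (h1.trans hst)]

theorem stmt1 (σ δ : R3 → R3 → ℂ) (V : R3 → ℝ)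
    (hσ : IsPosTCKernel σ) (hδ : IsPosTCKernel δ)
    (hVmeas : Measurable V) (hVbdd : ∃ C : ℝ, ∀ x, |V x| ≤ C)
    (hVeven : ∀ x : R3, V (-x) = V x)
    (hint1 : Integrable (fun p : R3 × R3 => V (p.1 - p.2) *
      (‖σ p.1 p.2 + δ p.1 p.2‖ ^ 2 - ‖σ p.1 p.2‖ ^ 2)))
    (hint2 : Integrable (fun p : R3 × R3 =>
      |V (p.1 - p.2)| * (σ p.1 p.1 + δ p.1 p.1).re * (δ p.2 p.2).re)) :
    |∫ p : R3 × R3, V (p.1 - p.2) *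
        (‖σ p.1 p.2 + δ p.1 p.2‖ ^ 2 - ‖σ p.1 p.2‖ ^ 2)|
      ≤ 2 * ∫ p : R3 × R3,
          |V (p.1 - p.2)| * (σ p.1 p.1 + δ p.1 p.1).re * (δ p.2 p.2).re := by
  obtain ⟨lamσ, φσ, hlσ, -, -, hksσ, -⟩ := hσ
  obtain ⟨lamδ, φδ, hlδ, -, -, hksδ, -⟩ := hδ
  have hσd : ∀ x, 0 ≤ (σ x x).re := fun x =>
    (diag_hasSum hksσ x).nonneg (fun n => mul_nonneg (hlσ n) (sq_nonneg _))
  have hδd : ∀ x, 0 ≤ (δ x x).re := fun x =>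
    (diag_hasSum hksδ x).nonneg (fun n => mul_nonneg (hlδ n) (sq_nonneg _))
  have hσb := kernel_bound hlσ hksσ
  have hδb := kernel_bound hlδ hksδ
  set h : R3 × R3 → ℝ := fun p =>
    |V (p.1 - p.2)| * (σ p.1 p.1 + δ p.1 p.1).re * (δ p.2 p.2).re with hh
  have hVswap : ∀ p : R3 × R3, |V (p.2 - p.1)| = |V (p.1 - p.2)| := by
    intro p
    rw [show p.2 - p.1 = -(p.1 - p.2) by abel, hVeven]
  have hpt : ∀ p : R3 × R3,
      |V (p.1 - p.2) * (‖σ p.1 p.2 + δ p.1 p.2‖ ^ 2 - ‖σ p.1 p.2‖ ^ 2)|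
        ≤ h p + h p.swap := by
    intro ⟨x, y⟩
    simp only [hh, Prod.swap, Prod.fst, Prod.snd]
    have hA : 0 ≤ (σ x x).re + (δ x x).re := add_nonneg (hσd x) (hδd x)
    have hA' : 0 ≤ (σ y y).re + (δ y y).re := add_nonneg (hσd y) (hδd y)
    have hu : ‖σ x y + δ x y‖
        ≤ Real.sqrt ((σ x x).re + (δ x x).re) * Real.sqrt ((σ y y).re + (δ y y).re) :=
      calc ‖σ x y + δ x y‖ ≤ ‖σ x y‖ + ‖δ x y‖ := norm_add_le _ _
        _ ≤ Real.sqrt ((σ x x).re) * Real.sqrt ((σ y y).re)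
            + Real.sqrt ((δ x x).re) * Real.sqrt ((δ y y).re) :=
          add_le_add (hσb x y) (hδb x y)
        _ ≤ _ := sqrt_mix (hσd x) (hδd x) (hσd y) (hδd y)
    have hv : ‖σ x y‖
        ≤ Real.sqrt ((σ x x).re + (δ x x).re) * Real.sqrt ((σ y y).re + (δ y y).re) :=
      (hσb x y).trans (mul_le_mul (Real.sqrt_le_sqrt (by linarith [hδd x]))
        (Real.sqrt_le_sqrt (by linarith [hδd y])) (Real.sqrt_nonneg _) (Real.sqrt_nonneg _))
    have huv : |‖σ x y + δ x y‖ - ‖σ x y‖| ≤ ‖δ x y‖ := by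
      have := abs_norm_sub_norm_le (σ x y + δ x y) (σ x y)
      simpa using this
    have key := core_ineq hA hA' (hδd x) (hδd y) (norm_nonneg _) (norm_nonneg _)
      hu hv (hδb x y) huv
    rw [abs_mul]
    have hfin : |V (x - y)| * |‖σ x y + δ x y‖ ^ 2 - ‖σ x y‖ ^ 2|
        ≤ |V (x - y)| * (((σ x x).re + (δ x x).re) * (δ y y).re
            + ((σ y y).re + (δ y y).re) * (δ x x).re) :=
      mul_le_mul_of_nonneg_left key (abs_nonneg _)
    calc |V (x - y)| * |‖σ x y + δ x y‖ ^ 2 - ‖σ x y‖ ^ 2|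
        ≤ |V (x - y)| * (((σ x x).re + (δ x x).re) * (δ y y).re
            + ((σ y y).re + (δ y y).re) * (δ x x).re) := hfin
      _ = |V (x - y)| * (σ x x + δ x x).re * (δ y y).re
            + |V (y - x)| * (σ y y + δ y y).re * (δ x x).re := by
          rw [hVswap (x, y)]
          simp only [Complex.add_re]
          ring
  have hswapInt : Integrable (fun p : R3 × R3 => h p.swap) := swap_integrable h hint2
  have habs : |∫ p : R3 × R3, V (p.1 - p.2) * (‖σ p.1 p.2 + δ p.1 p.2‖ ^ 2 - ‖σ p.1 p.2‖ ^ 2)|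
      ≤ ∫ p : R3 × R3, |V (p.1 - p.2) * (‖σ p.1 p.2 + δ p.1 p.2‖ ^ 2 - ‖σ p.1 p.2‖ ^ 2)| := by
    simpa only [Real.norm_eq_abs] using norm_integral_le_integral_norm
      (fun p : R3 × R3 => V (p.1 - p.2) * (‖σ p.1 p.2 + δ p.1 p.2‖ ^ 2 - ‖σ p.1 p.2‖ ^ 2))
  calc |∫ p : R3 × R3, V (p.1 - p.2) * (‖σ p.1 p.2 + δ p.1 p.2‖ ^ 2 - ‖σ p.1 p.2‖ ^ 2)|
      ≤ ∫ p : R3 × R3, |V (p.1 - p.2) * (‖σ p.1 p.2 + δ p.1 p.2‖ ^ 2 - ‖σ p.1 p.2‖ ^ 2)| := habs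
    _ ≤ ∫ p : R3 × R3, (h p + h p.swap) :=
        integral_mono hint1.abs (hint2.add hswapInt) hpt
    _ = (∫ p : R3 × R3, h p) + ∫ p : R3 × R3, h p.swap := integral_add hint2 hswapInt
    _ = 2 * ∫ p : R3 × R3, h p := by rw [swap_int h]; ring
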